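/- Let E be the directed graph with a single vertex v and countably infinitely many edges {e_n}_{n ∈ ℕ}, each with range and source v (so that the associated graph C*-algebra is the Cuntz algebra O_∞). Let {p_v, s_{e_n}} be a Cuntz–Krieger E-family in a C*-algebra B in which p_v is a unit for B, let c(e_n) = e (Euler's number) for all n, and let β > 0. Then there is no state on B satisfying the algebraic (σᶜ, β)-KMS condition. -/

import Mathlib

open scoped ComplexOrder

/-- A directed graph: vertex set `V`, edge set `E`, range and source maps. -/
structure DirectedGraph (V : Type*) (E : Type*) where
  r : E → V
  s : E → V

namespace DirectedGraph

variable {V E : Type*}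

/-- A finite path `μ = μ₁…μₙ` in a directed graph, recorded as the list of its
edges (in order) together with its range vertex; a path of length `0` is a single
vertex.  We require `s (μᵢ) = r (μᵢ₊₁)` and that the range vertex is `r (μ₁)`
when the path is nonempty. -/
structure Path (G : DirectedGraph V E) where
  rng : V
  edges : List E
  chain : edges.Chain' fun a b => G.s a = G.r b
  head_compat : ∀ e ∈ edges.head?, G.r e = rng

/-- The source `s(μ)` of a path. -/
def Path.src {G : DirectedGraph V E} (μ : G.Path) : V :=
  μ.edges.getLast?.elim μ.rng G.s

/-- The length `|μ|` of a path. -/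
def Path.length {G : DirectedGraph V E} (μ : G.Path) : ℕ := μ.edges.length

/-- The length-`0` path at a vertex. -/
def Path.ofVertex (G : DirectedGraph V E) (v : V) : G.Path :=
  ⟨v, [], by first | exact List.IsChain.nil | exact List.chain'_nil | trivial | constructor, by simp⟩

/-- `ρ.IsComp μ ν` says that `ρ` is the concatenation `μν` (so in particular
`s(μ) = r(ν)`). -/
def Path.IsComp {G : DirectedGraph V E} (ρ μ ν : G.Path) : Prop :=
  μ.src = ν.rng ∧ ρ.edges = μ.edges ++ ν.edges ∧ ρ.rng = μ.rng

/-- A vertex is singular if it receives no edges or infinitely many edges. -/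
def Singular (G : DirectedGraph V E) (v : V) : Prop :=
  {e | G.r e = v} = ∅ ∨ {e | G.r e = v}.Infinite

end DirectedGraph

/-- A Cuntz–Krieger `E`-family in a `*`-algebra `B`: mutually orthogonal
projections `P v` and partial isometries `S e` with mutually orthogonal ranges,
subject to the Cuntz–Krieger relations. -/
structure CKFamily {V E : Type*} (G : DirectedGraph V E) (B : Type*)
    [NonUnitalRing B] [StarRing B] [PartialOrder B] where
  P : V → B
  S : E → B
  P_sa : ∀ v, star (P v) = P v
  P_idem : ∀ v, P v * P v = P v
  P_orth : ∀ v w, v ≠ w → P v * P w = 0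
  S_partialIsometry : ∀ e, S e * star (S e) * S e = S e
  range_orth : ∀ e f, e ≠ f → S e * star (S e) * (S f * star (S f)) = 0
  ck1 : ∀ e, star (S e) * S e = P (G.s e)
  ck2 : ∀ e, S e * star (S e) ≤ P (G.r e)
  ck3 : ∀ v (h : {e | G.r e = v}.Finite), {e | G.r e = v}.Nonempty →
    P v = ∑ e ∈ h.toFinset, S e * star (S e)

namespace CKFamily

variable {V E B : Type*} {G : DirectedGraph V E}

section Algebraic

variable [NonUnitalRing B] [StarRing B] [PartialOrder B]

/-- `s_μ = s_{μ₁} ⋯ s_{μₙ}` for a path `μ`, with `s_v = p_v` for a vertex. -/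
def sP (F : CKFamily G B) (μ : G.Path) : B :=
  match μ.edges with
  | [] => F.P μ.rng
  | e :: es => es.foldl (fun b f => b * F.S f) (F.S e)

end Algebraic

section CStar

variable [NonUnitalNormedRing B] [StarRing B] [PartialOrder B]
  [NormedSpace ℂ B] [IsScalarTower ℂ B B] [SMulCommClass ℂ B B] [StarModule ℂ B]

/-- The submodule `F_k` = closed span of `{s_μ s_ν* : μ, ν ∈ Eᵏ, s(μ) = s(ν)}`. -/
def FkSub (F : CKFamily G B) (k : ℕ) : Submodule ℂ B :=
  (Submodule.span ℂ {x : B | ∃ μ ν : G.Path, μ.length = k ∧ ν.length = k ∧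
    μ.src = ν.src ∧ x = F.sP μ * star (F.sP ν)}).topologicalClosure

/-- The set `F_k`. -/
def Fk (F : CKFamily G B) (k : ℕ) : Set B := ↑(F.FkSub k)

/-- `ℰ_k` = closed span of `{s_μ s_ν* : μ, ν ∈ Eᵏ, s(μ) = s(ν) singular}`. -/
def Ek (F : CKFamily G B) (k : ℕ) : Set B :=
  ↑((Submodule.span ℂ {x : B | ∃ μ ν : G.Path, μ.length = k ∧ ν.length = k ∧
    μ.src = ν.src ∧ G.Singular μ.src ∧
    x = F.sP μ * star (F.sP ν)}).topologicalClosure)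

/-- `C_k = F_0 + ⋯ + F_k`. -/
def Ck (F : CKFamily G B) (k : ℕ) : Set B :=
  {x : B | ∃ f : Fin (k + 1) → B, (∀ i : Fin (k + 1), f i ∈ F.Fk i) ∧ x = ∑ i, f i}

/-- The submodule given by the closed span of
`{s_μ s_ν* : μ, ν ∈ E*, |μ| = |ν|, s(μ) = s(ν)}` (the "core"). -/
def coreSub (F : CKFamily G B) : Submodule ℂ B :=
  (Submodule.span ℂ {x : B | ∃ μ ν : G.Path, μ.length = ν.length ∧
    μ.src = ν.src ∧ x = F.sP μ * star (F.sP ν)}).topologicalClosure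

/-- A gauge action for a Cuntz–Krieger family: a point-norm continuous action of
the circle group by `*`-automorphisms fixing the `P v` and scaling the `S e`. -/
structure GaugeAction (F : CKFamily G B) where
  γ : Circle → B →L[ℂ] B
  map_one : γ 1 = ContinuousLinearMap.id ℂ B
  map_mul : ∀ z w, γ (z * w) = (γ z).comp (γ w)
  mul_hom : ∀ z (x y : B), γ z (x * y) = γ z x * γ z y
  star_hom : ∀ z (x : B), γ z (star x) = star (γ z x)
  cont : ∀ x : B, Continuous fun z => γ z x
  gauge_P : ∀ z v, γ z (F.P v) = F.P v
  gauge_S : ∀ z e, γ z (F.S e) = (z : ℂ) • F.S e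

/-- The fixed point algebra of a gauge action. -/
def GaugeAction.fixed {F : CKFamily G B} (γ : GaugeAction F) : Set B :=
  {a : B | ∀ z, γ.γ z a = a}

/-- `B` is generated, as a C*-algebra, by the family. -/
def Generates (F : CKFamily G B) : Prop :=
  closure (↑(NonUnitalStarAlgebra.adjoin ℂ
    (Set.range F.P ∪ Set.range F.S)) : Set B) = Set.univ

/-- The universality hypotheses: all vertex projections are nonzero, `B` is
generated by the family, and `B` carries a gauge action. -/
def IsUniversal (F : CKFamily G B) : Prop :=
  (∀ v, F.P v ≠ 0) ∧ F.Generates ∧ Nonempty (GaugeAction F)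

end CStar

end CKFamily

section States

variable {B : Type*} [NonUnitalNormedRing B] [StarRing B] [PartialOrder B]
  [NormedSpace ℂ B]

/-- A state: a positive continuous linear functional of norm one. -/
def IsStateOn (φ : B →L[ℂ] ℂ) : Prop :=
  ‖φ‖ = 1 ∧ ∀ x : B, 0 ≤ x → 0 ≤ φ x

end States

/-- `c(μ) = c(μ₁) ⋯ c(μₙ)`, with `c(v) = 1` for a vertex. -/
def cPath {V E : Type*} {G : DirectedGraph V E} (c : E → ℝ) (μ : G.Path) : ℝ :=
  (μ.edges.map c).prod

/-- The algebraic `(σᶜ, β)`-KMS condition, checked on spanning elements. -/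
def KMSCondition {V E B : Type*} {G : DirectedGraph V E}
    [NonUnitalNormedRing B] [StarRing B] [PartialOrder B] [NormedSpace ℂ B]
    (F : CKFamily G B) (c : E → ℝ) (β : ℝ) (φ : B →L[ℂ] ℂ) : Prop :=
  ∀ μ ν α η : G.Path, μ.src = ν.src → α.src = η.src →
    φ (F.sP μ * star (F.sP ν) * (F.sP α * star (F.sP η))) =
      Complex.ofReal (cPath c μ ^ (-β) * cPath c ν ^ β) *
        φ (F.sP α * star (F.sP η) * (F.sP μ * star (F.sP ν)))

/-- The graph with one vertex and countably many loops; its graph C*-algebra is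
the Cuntz algebra `O_∞`. -/
def cuntzInftyGraph : DirectedGraph Unit ℕ :=
  ⟨fun _ => (), fun _ => ()⟩

private lemma aux_linear_nonneg (A C : ℂ) (h : ∀ s : ℝ, 0 ≤ (s : ℂ) * A + C) :
    A = 0 := by
  have him : ∀ s : ℝ, s * A.im + C.im = 0 := by
    intro s
    have hs := h s
    rw [Complex.le_def] at hs
    simpa [Complex.add_im, Complex.mul_im] using hs.2.symm
  have hCim : C.im = 0 := by simpa using him 0
  have hAim : A.im = 0 := by
    have := him 1
    rw [hCim] at this
    linarith
  have hre : ∀ s : ℝ, 0 ≤ s * A.re + C.re := by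
    intro s
    have hs := h s
    rw [Complex.le_def] at hs
    simpa [Complex.add_re, Complex.mul_re] using hs.1
  have hAre : A.re = 0 := by
    by_contra hne
    have := hre ((-(C.re) - 1) / A.re)
    rw [div_mul_cancel₀ _ hne] at this
    linarith
  exact Complex.ext hAre hAim

/-- for the gauge action (`c ≡ e`) on `O_∞` there is no
`(σᶜ, β)`-KMS state, for any `β > 0`. -/
theorem no_KMS_state_Oinfty {B : Type*} [NonUnitalNormedRing B]
    [StarRing B] [PartialOrder B] [StarOrderedRing B] [NormedSpace ℂ B]
    [IsScalarTower ℂ B B] [SMulCommClass ℂ B B] [StarModule ℂ B]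
    [CStarRing B] [CompleteSpace B]
    (F : CKFamily cuntzInftyGraph B)
    (hunit : ∀ b : B, F.P () * b = b ∧ b * F.P () = b)
    (β : ℝ) (hβ : 0 < β) :
    ¬ ∃ φ : B →L[ℂ] ℂ, IsStateOn φ ∧
      KMSCondition F (fun _ => Real.exp 1) β φ := by
  rintro ⟨φ, ⟨hnorm, hpos⟩, hKMS⟩
  set p : B := F.P () with hp
  let vc : cuntzInftyGraph.Path := ⟨(), [], List.IsChain.nil, by simp⟩
  let ec : ℕ → cuntzInftyGraph.Path := fun n => ⟨(), [n], List.IsChain.singleton _, by simp⟩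
  have hsPv : F.sP vc = p := rfl
  have hsPe : ∀ n, F.sP (ec n) = F.S n := fun n => rfl
  have hstarp : star p = p := F.P_sa ()
  have hpp : p * p = p := F.P_idem ()
  -- KMS gives φ (S n * star (S n)) = exp (-β) * φ p
  have hkey : ∀ n, φ (F.S n * star (F.S n)) = Complex.ofReal (Real.exp (-β)) * φ p := by
    intro n
    have h := hKMS (ec n) vc vc (ec n) (Subsingleton.elim _ _) (Subsingleton.elim _ _)
    rw [hsPv, hsPe, hstarp] at h
    have hc1 : cPath (fun _ => Real.exp 1) (ec n) = Real.exp 1 := by simp [cPath, ec]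
    have hc2 : cPath (fun _ => Real.exp 1) vc = 1 := by simp [cPath, vc]
    rw [hc1, hc2, Real.one_rpow, mul_one, Real.exp_one_rpow] at h
    have e1 : F.S n * p * (p * star (F.S n)) = F.S n * star (F.S n) := by
      rw [(hunit (F.S n)).2, (hunit (star (F.S n))).1]
    have e2 : p * star (F.S n) * (F.S n * p) = p := by
      rw [(hunit (star (F.S n))).1, (hunit (F.S n)).2, F.ck1 n]
    rw [e1, e2] at h
    exact h
  have hppos : (0 : ℂ) ≤ φ p := by
    have hp0 : (0 : B) ≤ p := by
      have := star_mul_self_nonneg p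
      rwa [hstarp, hpp] at this
    exact hpos p hp0
  -- the sum of N range projections is dominated by p
  have hQ : ∀ N : ℕ, 0 ≤ φ p - (N : ℂ) * (Complex.ofReal (Real.exp (-β)) * φ p) := by
    intro N
    set q : B := ∑ i ∈ Finset.range N, F.S i * star (F.S i) with hq
    have hterm : ∀ i j : ℕ, (F.S i * star (F.S i)) * (F.S j * star (F.S j)) =
        if i = j then F.S i * star (F.S i) else 0 := by
      intro i j
      by_cases h : i = j
      · subst h
        rw [if_pos rfl, ← mul_assoc, F.S_partialIsometry]
      · rw [if_neg h]
        exact F.range_orth i j h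
    have hqq : q * q = q := by
      rw [hq, Finset.sum_mul_sum]
      refine Finset.sum_congr rfl fun i hi => ?_
      rw [Finset.sum_congr rfl fun j _ => hterm i j]
      simp [Finset.mem_range.mp hi]
    have hstarq : star q = q := by
      rw [hq, star_sum]
      exact Finset.sum_congr rfl fun i _ => by rw [star_mul, star_star]
    have hpq : p * q = q := (hunit q).1
    have hqp : q * p = q := (hunit q).2
    have hsub : (0 : B) ≤ p - q := by
      have heq : star (p - q) * (p - q) = p - q := by
        rw [star_sub, hstarp, hstarq, mul_sub, sub_mul, sub_mul, hpp, hpq, hqp, hqq]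
        abel
      have := star_mul_self_nonneg (p - q)
      rwa [heq] at this
    have hps := hpos _ hsub
    rw [map_sub] at hps
    have hφq : φ q = (N : ℂ) * (Complex.ofReal (Real.exp (-β)) * φ p) := by
      rw [hq, map_sum, Finset.sum_congr rfl fun i _ => hkey i, Finset.sum_const,
        Finset.card_range, nsmul_eq_mul]
    rwa [hφq] at hps
  -- deduce φ p = 0
  have hreim := Complex.le_def.mp hppos
  have hφp0 : φ p = 0 := by
    obtain ⟨N, hN⟩ : ∃ N : ℕ, Real.exp β < N := exists_nat_gt _
    have h2 := (Complex.le_def.mp (hQ N)).1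
    have hmul : Real.exp (-β) * Real.exp β = 1 := by
      rw [← Real.exp_add]; simp
    set r : ℝ := (φ p).re with hr
    have him0 : (φ p).im = 0 := hreim.2.symm
    have h2' : (N : ℝ) * (Real.exp (-β) * r) ≤ r := by
      have : (0:ℝ) ≤ (φ p - (N : ℂ) * (Complex.ofReal (Real.exp (-β)) * φ p)).re := by
        simpa using h2
      rw [Complex.sub_re, Complex.mul_re] at this
      simp only [Complex.natCast_re, Complex.natCast_im, Complex.mul_re, Complex.mul_im,
        Complex.ofReal_re, Complex.ofReal_im, him0] at this
      nlinarith [this]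
    have hrnn : 0 ≤ r := by simpa using hreim.1
    have hr0 : r = 0 := by
      by_contra hne
      have hrpos : 0 < r := lt_of_le_of_ne hrnn (Ne.symm hne)
      have hlt : Real.exp β * (Real.exp (-β) * r) < (N : ℝ) * (Real.exp (-β) * r) :=
        mul_lt_mul_of_pos_right hN (mul_pos (Real.exp_pos _) hrpos)
      nlinarith [hlt, h2', hmul]
    exact Complex.ext (by simpa using hr0) him0
  -- positivity kills φ entirely
  have hφ0 : ∀ b : B, φ b = 0 := by
    intro b
    have key : ∀ t : ℂ,
        0 ≤ star t * φ b + t * φ (star b) + φ (star b * b) := by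
      intro t
      have h0 : (0 : B) ≤ star (t • p + b) * (t • p + b) := star_mul_self_nonneg _
      have h1 := hpos _ h0
      have hx : star (t • p + b) * (t • p + b)
          = (star t * t) • p + star t • b + t • star b + star b * b := by
        rw [star_add, star_smul, hstarp, add_mul, mul_add, mul_add,
          smul_mul_smul_comm, smul_mul_assoc, mul_smul_comm, hpp,
          (hunit b).1, (hunit (star b)).2]
        abel
      rw [hx] at h1
      simp only [map_add, map_smul, smul_eq_mul, hφp0, mul_zero, zero_add] at h1
      exact h1
    have hA : φ b + φ (star b) = 0 := by
      apply aux_linear_nonneg _ (φ (star b * b))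
      intro s
      have h := key (s : ℂ)
      have heq : (s : ℂ) * (φ b + φ (star b)) + φ (star b * b)
          = star (s : ℂ) * φ b + (s : ℂ) * φ (star b) + φ (star b * b) := by
        rw [Complex.star_def, Complex.conj_ofReal]; ring
      rw [heq]; exact h
    have hA' : Complex.I * (φ (star b) - φ b) = 0 := by
      apply aux_linear_nonneg _ (φ (star b * b))
      intro s
      have h := key ((s : ℂ) * Complex.I)
      have heq : (s : ℂ) * (Complex.I * (φ (star b) - φ b)) + φ (star b * b)
          = star ((s : ℂ) * Complex.I) * φ b + ((s : ℂ) * Complex.I) * φ (star b)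
            + φ (star b * b) := by
        rw [star_mul, Complex.star_def, Complex.conj_ofReal, Complex.conj_I]; ring
      rw [heq]; exact h
    have hdiff : φ (star b) - φ b = 0 :=
      (mul_eq_zero.mp hA').resolve_left Complex.I_ne_zero
    have hsb : φ (star b) = φ b := by linear_combination hdiff
    rw [hsb] at hA
    linear_combination hA / 2
  have hzero : φ = 0 := ContinuousLinearMap.ext fun b => hφ0 b
  rw [hzero, norm_zero] at hnorm
  exact zero_ne_one hnorm
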